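/- Let f be increasing and convex with F(x)=∫₀ˣ f and DF(x,y)=F(x+y)−F(x)−F(y). For any K ≥ 1 and any positive x₁,…,x_{K+1} with ∑ x_k = T, the revenue satisfies ∑_{k=1}^{K} DF(x_{k+1}, x_k) ≤ DF(T/2, T/2), i.e., the single update at time T/2 maximizes the time-dependent pricing revenue. -/

import Mathlib

noncomputable def Gaux (f : ℝ → ℝ) : ℝ → ℝ := fun u => ∫ t in (0:ℝ)..u, f t

lemma Gaux_shift {f : ℝ → ℝ} (hm : Monotone f) (a x : ℝ) :
    Gaux f (a + x) - Gaux f a = ∫ t in (0:ℝ)..x, f (t + a) := by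
  have h1 : (∫ t in (0:ℝ)..(a+x), f t) - ∫ t in (0:ℝ)..a, f t
      = ∫ t in a..(a+x), f t :=
    intervalIntegral.integral_interval_sub_left hm.intervalIntegrable
      hm.intervalIntegrable
  have h2 : (∫ t in (0:ℝ)..x, f (t + a)) = ∫ t in (0+a)..(x+a), f t :=
    intervalIntegral.integral_comp_add_right f a
  simp only [Gaux]
  rw [h1, h2, zero_add, add_comm x a]

lemma Gaux_mono_shift {f : ℝ → ℝ} (hm : Monotone f) {y a b : ℝ}
    (hy : 0 ≤ y) (hab : a ≤ b) :
    Gaux f (a + y) - Gaux f a ≤ Gaux f (b + y) - Gaux f b := by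
  rw [Gaux_shift hm, Gaux_shift hm]
  have hma : Monotone fun t => f (t + a) := fun s t h => hm (by linarith)
  have hmb : Monotone fun t => f (t + b) := fun s t h => hm (by linarith)
  exact intervalIntegral.integral_mono_on hy hma.intervalIntegrable
    hmb.intervalIntegrable (fun t _ => hm (by linarith))

lemma Gaux_mid {f : ℝ → ℝ} (hm : Monotone f) (u v : ℝ) :
    2 * Gaux f ((u + v) / 2) ≤ Gaux f u + Gaux f v := by
  rcases le_total u v with h | h
  · have h0 := Gaux_mono_shift hm (y := (v - u) / 2)
      (by linarith) (show u ≤ (u + v) / 2 by linarith)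
    have e1 : u + (v - u) / 2 = (u + v) / 2 := by ring
    have e2 : (u + v) / 2 + (v - u) / 2 = v := by ring
    rw [e1, e2] at h0; linarith
  · have h0 := Gaux_mono_shift hm (y := (u - v) / 2)
      (by linarith) (show v ≤ (u + v) / 2 by linarith)
    have e1 : v + (u - v) / 2 = (u + v) / 2 := by ring
    have e2 : (u + v) / 2 + (u - v) / 2 = u := by ring
    rw [e1, e2] at h0; linarith

lemma conv_pointwise {f : ℝ → ℝ} (hc : ConvexOn ℝ Set.univ f)
    {y z : ℝ} (hy : 0 ≤ y) (hz : 0 ≤ z) (t : ℝ) :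
    f (t + y) + f (t + z) ≤ f t + f (t + (y + z)) := by
  rcases eq_or_lt_of_le (add_nonneg hy hz) with h | h
  · have hy0 : y = 0 := by linarith
    have hz0 : z = 0 := by linarith
    simp [hy0, hz0]
  · have hs : (y + z) ≠ 0 := ne_of_gt h
    have habs : z / (y + z) + y / (y + z) = 1 := by
      rw [← add_div, add_comm z y]; exact div_self hs
    have h1 := hc.2 (Set.mem_univ t) (Set.mem_univ (t + (y + z)))
      (div_nonneg hz h.le) (div_nonneg hy h.le) habs
    have h2 := hc.2 (Set.mem_univ t) (Set.mem_univ (t + (y + z)))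
      (div_nonneg hy h.le) (div_nonneg hz h.le)
      (by linarith : y / (y + z) + z / (y + z) = 1)
    simp only [smul_eq_mul] at h1 h2
    have pt1 : z / (y + z) * t + y / (y + z) * (t + (y + z)) = t + y := by
      field_simp; ring
    have pt2 : y / (y + z) * t + z / (y + z) * (t + (y + z)) = t + z := by
      field_simp; ring
    rw [pt1] at h1
    rw [pt2] at h2
    have hadd := add_le_add h1 h2
    have e : z / (y + z) * f t + y / (y + z) * f (t + (y + z))
        + (y / (y + z) * f t + z / (y + z) * f (t + (y + z)))
        = (z / (y + z) + y / (y + z)) * f t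
          + (z / (y + z) + y / (y + z)) * f (t + (y + z)) := by ring
    rw [e, habs, one_mul, one_mul] at hadd
    exact hadd

lemma Gaux_superadd {f : ℝ → ℝ} (hm : Monotone f) (hc : ConvexOn ℝ Set.univ f)
    {x y z : ℝ} (hx : 0 ≤ x) (hy : 0 ≤ y) (hz : 0 ≤ z) :
    Gaux f (x + y) + Gaux f (y + z) + Gaux f (x + z)
      ≤ Gaux f (x + y + z) + Gaux f x + Gaux f y + Gaux f z := by
  have iy : IntervalIntegrable (fun t => f (t + y)) MeasureTheory.volume 0 x :=
    (show Monotone fun t => f (t + y) from fun s t h => hm (by linarith)).intervalIntegrable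
  have iz : IntervalIntegrable (fun t => f (t + z)) MeasureTheory.volume 0 x :=
    (show Monotone fun t => f (t + z) from fun s t h => hm (by linarith)).intervalIntegrable
  have iyz : IntervalIntegrable (fun t => f (t + (y + z))) MeasureTheory.volume 0 x :=
    (show Monotone fun t => f (t + (y + z)) from fun s t h => hm (by linarith)).intervalIntegrable
  have i0 : IntervalIntegrable f MeasureTheory.volume 0 x := hm.intervalIntegrable
  have h0 : (0:ℝ) ≤ ∫ t in (0:ℝ)..x, (f (t + (y + z)) + f t - f (t + y) - f (t + z)) :=
    intervalIntegral.integral_nonneg hx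
      (fun u _ => by have := conv_pointwise hc hy hz u; linarith)
  rw [intervalIntegral.integral_sub ((iyz.add i0).sub iy) iz,
      intervalIntegral.integral_sub (iyz.add i0) iy,
      intervalIntegral.integral_add iyz i0] at h0
  have s1 := Gaux_shift hm (y + z) x
  have s2 := Gaux_shift hm y x
  have s3 := Gaux_shift hm z x
  have s4 : Gaux f (0 + x) - Gaux f 0 = ∫ t in (0:ℝ)..x, f (t + 0) :=
    Gaux_shift hm 0 x
  simp only [zero_add, add_zero] at s4
  have g0 : Gaux f 0 = 0 := by simp [Gaux]
  have e1 : y + z + x = x + y + z := by ring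
  have e2 : y + x = x + y := by ring
  have e3 : z + x = x + z := by ring
  rw [e1] at s1
  rw [e2] at s2
  rw [e3] at s3
  linarith

lemma aux_main {f : ℝ → ℝ} (hm : Monotone f) (hc : ConvexOn ℝ Set.univ f) :
    ∀ (K : ℕ) (x : ℕ → ℝ), (∀ k ∈ Finset.Icc 1 (K+2), 0 ≤ x k) →
    ∑ k ∈ Finset.Icc 1 (K+1), (Gaux f (x (k+1) + x k) - Gaux f (x (k+1)) - Gaux f (x k))
      ≤ Gaux f (∑ k ∈ Finset.Icc 1 (K+2), x k)
        - 2 * Gaux f ((∑ k ∈ Finset.Icc 1 (K+2), x k)/2) := by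
  intro K
  induction K with
  | zero =>
    intro x hx
    have h2 : ∑ k ∈ Finset.Icc 1 2, x k = x 1 + x 2 := by
      rw [show (2:ℕ) = 1 + 1 from rfl,
        Finset.sum_Icc_succ_top (by norm_num : (1:ℕ) ≤ 1 + 1)]
      simp
    rw [Finset.Icc_self, Finset.sum_singleton, h2]
    have hmid := Gaux_mid hm (x 1) (x 2)
    have e : x 2 + x 1 = x 1 + x 2 := add_comm _ _
    rw [e]; linarith
  | succ K ih =>
    intro x hx
    set y : ℕ → ℝ := fun k => x k + (if k = K + 1 then x (K + 3) else 0) with hy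
    have hx' : ∀ k, 1 ≤ k → k ≤ K + 3 → 0 ≤ x k := by
      intro k h1 h2
      exact hx k (Finset.mem_Icc.mpr ⟨h1, h2⟩)
    have hynn : ∀ k ∈ Finset.Icc 1 (K+2), 0 ≤ y k := by
      intro k hk
      obtain ⟨h1, h2⟩ := Finset.mem_Icc.mp hk
      have := hx' k h1 (by omega)
      have := hx' (K+3) (by omega) le_rfl
      simp only [hy]
      split <;> linarith
    have hsum_y : ∑ k ∈ Finset.Icc 1 (K+2), y k = ∑ k ∈ Finset.Icc 1 (K+3), x k := by
      simp only [hy]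
      rw [Finset.sum_add_distrib,
        Finset.sum_ite_eq' (Finset.Icc 1 (K+2)) (K+1) (fun _ => x (K+3)),
        if_pos (Finset.mem_Icc.mpr ⟨by omega, by omega⟩),
        show K + 3 = (K + 2) + 1 from rfl,
        Finset.sum_Icc_succ_top (by omega : (1:ℕ) ≤ K + 2 + 1)]
    have hchain : ∑ k ∈ Finset.Icc 1 (K+2), (Gaux f (x (k+1) + x k) - Gaux f (x (k+1)) - Gaux f (x k))
        ≤ ∑ k ∈ Finset.Icc 1 (K+1), (Gaux f (y (k+1) + y k) - Gaux f (y (k+1)) - Gaux f (y k)) := by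
      rw [show K + 2 = (K + 1) + 1 from rfl,
        Finset.sum_Icc_succ_top (by omega : (1:ℕ) ≤ K + 1 + 1),
        Finset.sum_Icc_succ_top (by omega : (1:ℕ) ≤ K + 1),
        Finset.sum_Icc_succ_top (by omega : (1:ℕ) ≤ K + 1)]
      have hpart : ∑ k ∈ Finset.Icc 1 K, (Gaux f (x (k+1) + x k) - Gaux f (x (k+1)) - Gaux f (x k))
          ≤ ∑ k ∈ Finset.Icc 1 K, (Gaux f (y (k+1) + y k) - Gaux f (y (k+1)) - Gaux f (y k)) := by
        apply Finset.sum_le_sum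
        intro k hk
        obtain ⟨h1, h2⟩ := Finset.mem_Icc.mp hk
        have hyk : y k = x k := by
          simp only [hy]
          rw [if_neg (by omega)]
          ring
        have hyk1 : y (k+1) = x (k+1) + (if k + 1 = K + 1 then x (K+3) else 0) := rfl
        have hcnn : (0:ℝ) ≤ (if k + 1 = K + 1 then x (K+3) else 0) := by
          split
          · exact hx' (K+3) (by omega) le_rfl
          · exact le_refl 0
        have hms := Gaux_mono_shift hm (y := x k)
          (hx' k h1 (by omega))
          (show x (k+1) ≤ x (k+1) + (if k + 1 = K + 1 then x (K+3) else 0) by linarith)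
        rw [hyk, hyk1]
        linarith
      have htop : (Gaux f (x (K+1+1) + x (K+1)) - Gaux f (x (K+1+1)) - Gaux f (x (K+1)))
          + (Gaux f (x (K+1+1+1) + x (K+1+1)) - Gaux f (x (K+1+1+1)) - Gaux f (x (K+1+1)))
          ≤ Gaux f (y (K+1+1) + y (K+1)) - Gaux f (y (K+1+1)) - Gaux f (y (K+1)) := by
        have hy1 : y (K+1) = x (K+1) + x (K+3) := by
          simp [hy]
        have hy2 : y (K+1+1) = x (K+2) := by
          simp only [hy]
          rw [if_neg (by omega)]
          ring
        have ha : 0 ≤ x (K+1) := hx' (K+1) (by omega) (by omega)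
        have hb : 0 ≤ x (K+2) := hx' (K+2) (by omega) (by omega)
        have hcc : 0 ≤ x (K+3) := hx' (K+3) (by omega) le_rfl
        have hsup := Gaux_superadd hm hc ha hb hcc
        rw [hy1, hy2,
          show K+1+1 = K+2 from rfl, show K+1+1+1 = K+3 from rfl]
        have e1 : x (K+2) + x (K+1) = x (K+1) + x (K+2) := add_comm _ _
        have e2 : x (K+3) + x (K+2) = x (K+2) + x (K+3) := add_comm _ _
        have e3 : x (K+2) + (x (K+1) + x (K+3)) = x (K+1) + x (K+2) + x (K+3) := by ring
        have e4 : x (K+1) + x (K+3) = x (K+1) + x (K+3) := rfl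
        rw [e1, e2, e3]
        linarith
      linarith
    have hIH := ih y hynn
    rw [hsum_y] at hIH
    calc ∑ k ∈ Finset.Icc 1 (K+1+1), (Gaux f (x (k+1) + x k) - Gaux f (x (k+1)) - Gaux f (x k))
        ≤ ∑ k ∈ Finset.Icc 1 (K+1), (Gaux f (y (k+1) + y k) - Gaux f (y (k+1)) - Gaux f (y k)) := hchain
      _ ≤ _ := hIH

theorem single_update_maximizes_time_dependent_revenue
    (f : ℝ → ℝ) (hf_mono : Monotone f) (hf_conv : ConvexOn ℝ Set.univ f)
    (hf0 : 0 ≤ f 0)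
    (F : ℝ → ℝ) (hF : ∀ x, F x = ∫ t in (0:ℝ)..x, f t)
    (DF : ℝ → ℝ → ℝ) (hDF : ∀ x y, DF x y = F (x + y) - F x - F y)
    (T : ℝ) (hT : 0 < T)
    (K : ℕ) (hK : 1 ≤ K) (x : ℕ → ℝ)
    (hpos : ∀ k ∈ Finset.Icc 1 (K + 1), 0 < x k)
    (hsum : ∑ k ∈ Finset.Icc 1 (K + 1), x k = T) :
    ∑ k ∈ Finset.Icc 1 K, DF (x (k + 1)) (x k) ≤ DF (T / 2) (T / 2) := by
  have hDF' : ∀ a b, DF a b = Gaux f (a + b) - Gaux f a - Gaux f b := by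
    intro a b
    rw [hDF, hF, hF, hF]
    rfl
  obtain ⟨M, rfl⟩ := Nat.exists_eq_add_of_le hK
  rw [Nat.add_comm 1 M] at hpos hsum ⊢
  have hxnn : ∀ k ∈ Finset.Icc 1 (M+2), 0 ≤ x k := by
    intro k hk
    exact (hpos k hk).le
  have H := aux_main hf_mono hf_conv M x hxnn
  rw [hsum] at H
  simp only [hDF']
  have e : T / 2 + T / 2 = T := by ring
  rw [e]
  linarith
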